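/- For every positive integer a and every integer μ ≥ 0, Σ_{κ=0}^{μ} C(μ,κ)·((−1)^{μ−κ} a^{κ−1} B_κ/(μ+1−κ))·Σ_{i=1}^{a−1} (−i)^{μ+1−κ} = (B_{μ+1}/(μ+1))·(a^{μ+1}−1). -/

import Mathlib

open Finset

private lemma sum_Icc_pow_eq10 (a p : ℕ) (ha : 0 < a) (hp : p ≠ 0) :
    ∑ i ∈ Finset.Icc 1 (a - 1), ((i : ℚ)) ^ p = ∑ i ∈ Finset.range a, (i : ℚ) ^ p := by
  have h : Finset.range a = insert 0 (Finset.Icc 1 (a - 1)) := by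
    ext x; simp only [Finset.mem_range, Finset.mem_insert, Finset.mem_Icc]; omega
  rw [h, Finset.sum_insert (by simp)]
  simp [zero_pow hp]

private lemma nat_choose_id10 (μ κ j : ℕ) (hκ : κ ≤ μ) (hj : j ≤ μ + 1 - κ) :
    μ.choose κ * ((μ + 2 - κ).choose j) * ((μ + 1) * (μ + 2)) =
      (μ + 2).choose j * ((μ + 2 - j).choose κ) * ((μ + 1 - κ) * (μ + 2 - κ)) := by
  have h1 : μ.choose κ * (μ + 1) = (μ + 1).choose κ * (μ + 1 - κ) := Nat.choose_mul_succ_eq μ κ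
  have h2 : (μ + 1).choose κ * (μ + 2) = (μ + 2).choose κ * (μ + 2 - κ) :=
    Nat.choose_mul_succ_eq (μ + 1) κ
  have h3 : (μ + 2).choose κ * ((μ + 2 - κ).choose j) =
      (μ + 2).choose j * ((μ + 2 - j).choose κ) := by
    have e1 := Nat.choose_mul (n := μ + 2) (show κ ≤ κ + j by omega)
    have e2 := Nat.choose_mul (n := μ + 2) (show j ≤ κ + j by omega)
    have e3 : (κ + j).choose κ = (κ + j).choose j := by
      rw [← Nat.choose_symm (show j ≤ κ + j by omega)]; congr 1; omega
    simp only [show κ + j - κ = j by omega, show κ + j - j = κ by omega] at e1 e2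
    rw [← e1, e3, e2]
  calc μ.choose κ * ((μ + 2 - κ).choose j) * ((μ + 1) * (μ + 2))
      = μ.choose κ * (μ + 1) * (μ + 2) * ((μ + 2 - κ).choose j) := by ring
    _ = (μ + 1).choose κ * (μ + 1 - κ) * (μ + 2) * ((μ + 2 - κ).choose j) := by rw [h1]
    _ = (μ + 1).choose κ * (μ + 2) * ((μ + 2 - κ).choose j) * (μ + 1 - κ) := by ring
    _ = (μ + 2).choose κ * (μ + 2 - κ) * ((μ + 2 - κ).choose j) * (μ + 1 - κ) := by rw [h2]
    _ = (μ + 2).choose κ * ((μ + 2 - κ).choose j) * ((μ + 1 - κ) * (μ + 2 - κ)) := by ring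
    _ = (μ + 2).choose j * ((μ + 2 - j).choose κ) * ((μ + 1 - κ) * (μ + 2 - κ)) := by rw [h3]

/-- `Σ_{κ=0}^{μ} C(μ,κ)·((−1)^{μ−κ} a^{κ−1} B_κ/(μ+1−κ))·Σ_{i=1}^{a−1}(−i)^{μ+1−κ}
  = (B_{μ+1}/(μ+1))·(a^{μ+1}−1)`. -/
theorem stmt10 (a : ℕ) (ha : 0 < a) (μ : ℕ) :
    ∑ κ ∈ Finset.range (μ + 1),
        (μ.choose κ : ℚ) *
          ((-1 : ℚ) ^ (μ - κ) * (a : ℚ) ^ ((κ : ℤ) - 1) * bernoulli κ /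
            ((μ + 1 - κ : ℕ) : ℚ)) *
          ∑ i ∈ Finset.Icc 1 (a - 1), (-(i : ℚ)) ^ (μ + 1 - κ) =
      bernoulli (μ + 1) / ((μ : ℚ) + 1) * ((a : ℚ) ^ (μ + 1) - 1) := by
  have hA : ((a : ℚ)) ≠ 0 := Nat.cast_ne_zero.mpr ha.ne'
  have hμ1 : ((μ : ℚ) + 1) ≠ 0 := by positivity
  have hμ2 : ((μ : ℚ) + 2) ≠ 0 := by positivity
  have key : ∀ κ ∈ Finset.range (μ + 1),
      (μ.choose κ : ℚ) *
          ((-1 : ℚ) ^ (μ - κ) * (a : ℚ) ^ ((κ : ℤ) - 1) * bernoulli κ /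
            ((μ + 1 - κ : ℕ) : ℚ)) *
          ∑ i ∈ Finset.Icc 1 (a - 1), (-(i : ℚ)) ^ (μ + 1 - κ)
      = ∑ j ∈ Finset.range (μ + 2), (if κ + j < μ + 2 then
          (-((((μ + 2).choose j : ℕ) : ℚ) * bernoulli j * (a : ℚ) ^ (μ + 2 - j)) /
            ((a : ℚ) * ((μ : ℚ) + 1) * ((μ : ℚ) + 2))) *
            ((((μ + 2 - j).choose κ : ℕ) : ℚ) * bernoulli κ) else 0) := by
    intro κ hκ
    rw [Finset.mem_range] at hκ
    have hκμ : κ ≤ μ := by omega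
    have h1 : ∑ i ∈ Finset.Icc 1 (a - 1), (-(i : ℚ)) ^ (μ + 1 - κ)
        = (-1 : ℚ) ^ (μ + 1 - κ) * ∑ i ∈ Finset.range a, (i : ℚ) ^ (μ + 1 - κ) := by
      rw [← sum_Icc_pow_eq10 a _ ha (by omega), Finset.mul_sum]
      exact Finset.sum_congr rfl fun i _ => by rw [neg_pow]
    have hR : (∑ j ∈ Finset.range (μ + 2), (if κ + j < μ + 2 then
          (-((((μ + 2).choose j : ℕ) : ℚ) * bernoulli j * (a : ℚ) ^ (μ + 2 - j)) /
            ((a : ℚ) * ((μ : ℚ) + 1) * ((μ : ℚ) + 2))) *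
            ((((μ + 2 - j).choose κ : ℕ) : ℚ) * bernoulli κ) else 0))
        = ∑ j ∈ Finset.range (μ + 1 - κ + 1),
          (-((((μ + 2).choose j : ℕ) : ℚ) * bernoulli j * (a : ℚ) ^ (μ + 2 - j)) /
            ((a : ℚ) * ((μ : ℚ) + 1) * ((μ : ℚ) + 2))) *
            ((((μ + 2 - j).choose κ : ℕ) : ℚ) * bernoulli κ) := by
      rw [← Finset.sum_subset (Finset.range_subset_range.2 (show μ + 1 - κ + 1 ≤ μ + 2 by omega))
        (fun j _ hj => by rw [if_neg]; rw [Finset.mem_range] at hj; omega)]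
      exact Finset.sum_congr rfl fun j hj => if_pos (by rw [Finset.mem_range] at hj; omega)
    rw [hR, h1, sum_range_pow, Finset.mul_sum, Finset.mul_sum]
    refine Finset.sum_congr rfl fun j hj => ?_
    rw [Finset.mem_range] at hj
    have hjκ : j ≤ μ + 1 - κ := by omega
    have e1 : (-1 : ℚ) ^ (μ - κ) * (-1 : ℚ) ^ (μ + 1 - κ) = -1 := by
      rw [← pow_add, show μ - κ + (μ + 1 - κ) = 2 * (μ - κ) + 1 by omega, pow_succ, pow_mul]
      norm_num
    have e2 : (a : ℚ) ^ ((κ : ℤ) - 1) = (a : ℚ) ^ κ / (a : ℚ) := by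
      rw [zpow_sub₀ hA, zpow_one, zpow_natCast]
    have epow : (a : ℚ) ^ κ * (a : ℚ) ^ (μ + 1 - κ + 1 - j) = (a : ℚ) ^ (μ + 2 - j) := by
      rw [← pow_add]; congr 1; omega
    have c1 : ((μ + 1 - κ : ℕ) : ℚ) = (μ : ℚ) + 1 - (κ : ℚ) := by
      rw [Nat.cast_sub (by omega)]; push_cast; ring
    have c2 : ((μ + 2 - κ : ℕ) : ℚ) = (μ : ℚ) + 2 - (κ : ℚ) := by
      rw [Nat.cast_sub (by omega)]; push_cast; ring
    have hid : (μ.choose κ : ℚ) * (((μ + 2 - κ).choose j : ℕ) : ℚ) * (((μ : ℚ) + 1) * ((μ : ℚ) + 2)) =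
        (((μ + 2).choose j : ℕ) : ℚ) * (((μ + 2 - j).choose κ : ℕ) : ℚ) *
          ((((μ : ℚ) + 1) - κ) * (((μ : ℚ) + 2) - κ)) := by
      have hq : ((μ.choose κ * ((μ + 2 - κ).choose j) * ((μ + 1) * (μ + 2)) : ℕ) : ℚ) =
          (((μ + 2).choose j * ((μ + 2 - j).choose κ) * ((μ + 1 - κ) * (μ + 2 - κ)) : ℕ) : ℚ) := by
        exact_mod_cast congrArg (fun n : ℕ => (n : ℚ)) (nat_choose_id10 μ κ j hκμ hjκ)
      push_cast [Nat.cast_sub (show κ ≤ μ + 1 by omega), Nat.cast_sub (show κ ≤ μ + 2 by omega)]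
        at hq
      linear_combination hq
    have hcc : ((μ + 1 - κ + 1).choose j : ℚ) = (((μ + 2 - κ).choose j : ℕ) : ℚ) := by
      norm_cast; congr 1; omega
    have hmk1 : ((μ : ℚ) + 1) - κ ≠ 0 := by
      rw [← c1]; exact Nat.cast_ne_zero.mpr (by omega)
    have hmk2 : ((μ : ℚ) + 2) - κ ≠ 0 := by
      rw [← c2]; exact Nat.cast_ne_zero.mpr (by omega)
    have hden : ((μ + 1 - κ : ℕ) : ℚ) + 1 = ((μ : ℚ) + 2) - κ := by rw [c1]; ring
    have hdiv : ((μ.choose κ : ℕ) : ℚ) * (((μ + 2 - κ).choose j : ℕ) : ℚ) /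
          (((((μ : ℚ) + 1) - κ)) * ((((μ : ℚ) + 2) - κ))) =
        (((μ + 2).choose j : ℕ) : ℚ) * (((μ + 2 - j).choose κ : ℕ) : ℚ) /
          (((μ : ℚ) + 1) * ((μ : ℚ) + 2)) := by
      rw [div_eq_div_iff (mul_ne_zero hmk1 hmk2) (mul_ne_zero hμ1 hμ2)]
      linear_combination hid
    rw [hcc, hden, c1, e2]
    calc (μ.choose κ : ℚ) *
          ((-1 : ℚ) ^ (μ - κ) * ((a : ℚ) ^ κ / (a : ℚ)) * bernoulli κ / ((μ : ℚ) + 1 - (κ : ℚ))) *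
          ((-1 : ℚ) ^ (μ + 1 - κ) *
            (bernoulli j * (((μ + 2 - κ).choose j : ℕ) : ℚ) * (a : ℚ) ^ (μ + 1 - κ + 1 - j) /
              (((μ : ℚ) + 2) - κ)))
        = ((μ.choose κ : ℕ) : ℚ) * (((μ + 2 - κ).choose j : ℕ) : ℚ) /
            (((((μ : ℚ) + 1) - κ)) * ((((μ : ℚ) + 2) - κ))) *
            (((-1 : ℚ) ^ (μ - κ) * (-1 : ℚ) ^ (μ + 1 - κ)) * (bernoulli κ * bernoulli j) *
              ((a : ℚ) ^ κ * (a : ℚ) ^ (μ + 1 - κ + 1 - j) / (a : ℚ))) := by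
          field_simp
      _ = (((μ + 2).choose j : ℕ) : ℚ) * (((μ + 2 - j).choose κ : ℕ) : ℚ) /
            (((μ : ℚ) + 1) * ((μ : ℚ) + 2)) *
            ((-1 : ℚ) * (bernoulli κ * bernoulli j) * ((a : ℚ) ^ (μ + 2 - j) / (a : ℚ))) := by
          rw [hdiv, e1, epow]
      _ = -((((μ + 2).choose j : ℕ) : ℚ) * bernoulli j * (a : ℚ) ^ (μ + 2 - j)) /
            ((a : ℚ) * ((μ : ℚ) + 1) * ((μ : ℚ) + 2)) *
            ((((μ + 2 - j).choose κ : ℕ) : ℚ) * bernoulli κ) := by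
          field_simp
  rw [Finset.sum_congr rfl key, Finset.sum_comm, Finset.sum_range_succ']
  have hb : ∑ κ ∈ Finset.range (μ + 1), (((μ + 2).choose κ : ℕ) : ℚ) * bernoulli κ
      = -(((μ : ℚ) + 2) * bernoulli (μ + 1)) := by
    have h0 := sum_bernoulli (μ + 2)
    rw [Finset.sum_range_succ, if_neg (by omega)] at h0
    have hcs : (((μ + 2).choose (μ + 1) : ℕ) : ℚ) = (μ : ℚ) + 2 := by
      rw [Nat.choose_succ_self_right]; push_cast; ring
    rw [hcs] at h0
    linarith
  have hz : (∑ κ ∈ Finset.range (μ + 1), (if κ + 0 < μ + 2 then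
        (-((((μ + 2).choose 0 : ℕ) : ℚ) * bernoulli 0 * (a : ℚ) ^ (μ + 2 - 0)) /
          ((a : ℚ) * ((μ : ℚ) + 1) * ((μ : ℚ) + 2))) *
          ((((μ + 2 - 0).choose κ : ℕ) : ℚ) * bernoulli κ) else 0))
      = ((μ : ℚ) + 2) * bernoulli (μ + 1) * (a : ℚ) ^ (μ + 2) /
          ((a : ℚ) * ((μ : ℚ) + 1) * ((μ : ℚ) + 2)) := by
    have hcong : ∀ κ ∈ Finset.range (μ + 1), (if κ + 0 < μ + 2 then
        (-((((μ + 2).choose 0 : ℕ) : ℚ) * bernoulli 0 * (a : ℚ) ^ (μ + 2 - 0)) /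
          ((a : ℚ) * ((μ : ℚ) + 1) * ((μ : ℚ) + 2))) *
          ((((μ + 2 - 0).choose κ : ℕ) : ℚ) * bernoulli κ) else 0)
        = (-((a : ℚ) ^ (μ + 2)) / ((a : ℚ) * ((μ : ℚ) + 1) * ((μ : ℚ) + 2))) *
          ((((μ + 2).choose κ : ℕ) : ℚ) * bernoulli κ) := by
      intro κ hκ
      rw [Finset.mem_range] at hκ
      rw [if_pos (by omega)]
      norm_num
    rw [Finset.sum_congr rfl hcong, ← Finset.mul_sum, hb]
    ring
  have hpos : ∀ j ∈ Finset.range (μ + 1), (∑ κ ∈ Finset.range (μ + 1),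
        (if κ + (j + 1) < μ + 2 then
        (-((((μ + 2).choose (j + 1) : ℕ) : ℚ) * bernoulli (j + 1) * (a : ℚ) ^ (μ + 2 - (j + 1))) /
          ((a : ℚ) * ((μ : ℚ) + 1) * ((μ : ℚ) + 2))) *
          ((((μ + 2 - (j + 1)).choose κ : ℕ) : ℚ) * bernoulli κ) else 0))
      = if j = μ then (-(((μ : ℚ) + 2) * bernoulli (μ + 1) * (a : ℚ)) /
          ((a : ℚ) * ((μ : ℚ) + 1) * ((μ : ℚ) + 2))) else 0 := by
    intro j hj
    rw [Finset.mem_range] at hj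
    have hsub : Finset.range (μ + 1 - j) ⊆ Finset.range (μ + 1) :=
      Finset.range_subset_range.2 (by omega)
    rw [← Finset.sum_subset hsub
      (fun κ hκ1 hκ2 => by
        rw [Finset.mem_range] at hκ1 hκ2
        rw [if_neg (by omega)])]
    have hcong : ∀ κ ∈ Finset.range (μ + 1 - j), (if κ + (j + 1) < μ + 2 then
        (-((((μ + 2).choose (j + 1) : ℕ) : ℚ) * bernoulli (j + 1) * (a : ℚ) ^ (μ + 2 - (j + 1))) /
          ((a : ℚ) * ((μ : ℚ) + 1) * ((μ : ℚ) + 2))) *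
          ((((μ + 2 - (j + 1)).choose κ : ℕ) : ℚ) * bernoulli κ) else 0)
        = (-((((μ + 2).choose (j + 1) : ℕ) : ℚ) * bernoulli (j + 1) * (a : ℚ) ^ (μ + 2 - (j + 1))) /
          ((a : ℚ) * ((μ : ℚ) + 1) * ((μ : ℚ) + 2))) *
          ((((μ + 1 - j).choose κ : ℕ) : ℚ) * bernoulli κ) := by
      intro κ hκ
      rw [Finset.mem_range] at hκ
      rw [if_pos (by omega), show μ + 2 - (j + 1) = μ + 1 - j by omega]
    rw [Finset.sum_congr rfl hcong, ← Finset.mul_sum, sum_bernoulli]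
    by_cases hjm : j = μ
    · rw [hjm, if_pos (show μ + 1 - μ = 1 by omega), if_pos rfl, mul_one,
        show μ + 2 - (μ + 1) = 1 by omega, pow_one, Nat.choose_succ_self_right]
      push_cast; ring
    · rw [if_neg (by omega), if_neg hjm, mul_zero]
  rw [Finset.sum_congr rfl hpos, Finset.sum_ite_eq' (Finset.range (μ + 1)) μ,
    if_pos (Finset.self_mem_range_succ μ), hz]
  rw [show μ + 2 = (μ + 1) + 1 from rfl, pow_succ]
  field_simp
  ring
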